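/- Let T be a tree of order 2k+3 with diameter at most 4, rooted at a center, and let F_T be the forest of nontrivial star components of T minus its root, with p' = ω(F_T) components. Let H be a bipartite graph with parts X, Y where |X| ≥ e(F_T), |Y| ≥ p', and p' ≥ 2. If there exist vertices y_0, y_1, …, y_{p'-1} ∈ Y with deg_H(y_0) ≥ e(F_T) and deg_H(y_i) ≥ e(F_T) − 1 for all 1 ≤ i ≤ p'−1, then H contains a copy of F_T in which all centers of its star components lie in Y. -/

import Mathlib

open Finset SimpleGraph
open scoped Classical

/-- Eccentricity of a vertex in a finite graph. -/
noncomputable def ecc {V : Type*} [Fintype V] (G : SimpleGraph V) (u : V) : ℕ :=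
  univ.sup (fun v => G.dist u v)

/-- The graph obtained from `T` by deleting the vertex `r`. -/
def delRoot {V : Type*} (T : SimpleGraph V) (r : V) : SimpleGraph {w : V // w ≠ r} :=
  T.induce {w : V | w ≠ r}

/-- The number of edges of `T - r`, i.e. `e(F_T)` (all edges of `T - r` lie in
nontrivial star components). -/
noncomputable def eFT {V : Type*} [Fintype V] (T : SimpleGraph V) (r : V) : ℕ :=
  (delRoot T r).edgeFinset.card

/-- A component of `T - r` is nontrivial if it contains an edge. -/
def isNontriv {V : Type*} (T : SimpleGraph V) (r : V)
    (c : (delRoot T r).ConnectedComponent) : Prop :=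
  ∃ a b, (delRoot T r).Adj a b ∧ (delRoot T r).connectedComponentMk a = c

/-- `p'`: the number of nontrivial (star) components of `T - r`. -/
noncomputable def numNontriv {V : Type*} (T : SimpleGraph V) (r : V) : ℕ :=
  Nat.card {c : (delRoot T r).ConnectedComponent // isNontriv T r c}

/-- Choose a subset of `S` of size `m` (if possible). -/
noncomputable def part {γ : Type*} (S : Finset γ) (m : ℕ) : Finset γ :=
  if h : m ≤ S.card then (Finset.exists_subset_card_eq h).choose else S

lemma part_subset {γ : Type*} (S : Finset γ) (m : ℕ) : part S m ⊆ S := by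
  unfold part; split
  · exact (Finset.exists_subset_card_eq ‹_›).choose_spec.1
  · exact Finset.Subset.refl _

lemma part_card {γ : Type*} {S : Finset γ} {m : ℕ} (h : m ≤ S.card) : (part S m).card = m := by
  unfold part; rw [dif_pos h]
  exact (Finset.exists_subset_card_eq h).choose_spec.2

/-- Greedy pick: at step `j`, pick `d j` fresh elements of `N j`.
Returns (the `j`-th pick, the union of picks so far). -/
noncomputable def pickAux {γ : Type*} [DecidableEq γ] (N : ℕ → Finset γ) (d : ℕ → ℕ) :
    ℕ → Finset γ × Finset γ
  | 0 => (part (N 0) (d 0), part (N 0) (d 0))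
  | j+1 =>
      let U := (pickAux N d j).2
      (part (N (j+1) \ U) (d (j+1)), U ∪ part (N (j+1) \ U) (d (j+1)))

lemma pickAux_snd {γ : Type*} [DecidableEq γ] (N : ℕ → Finset γ) (d : ℕ → ℕ) (j : ℕ) :
    (pickAux N d (j+1)).2 = (pickAux N d j).2 ∪ (pickAux N d (j+1)).1 := rfl

lemma pickAux_fst_subset {γ : Type*} [DecidableEq γ] (N : ℕ → Finset γ) (d : ℕ → ℕ) (j : ℕ) :
    (pickAux N d j).1 ⊆ N j := by
  cases j with
  | zero => exact part_subset _ _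
  | succ j => exact (part_subset _ _).trans (Finset.sdiff_subset)

lemma pickAux_fst_subset_snd {γ : Type*} [DecidableEq γ] (N : ℕ → Finset γ) (d : ℕ → ℕ) (j : ℕ) :
    (pickAux N d j).1 ⊆ (pickAux N d j).2 := by
  cases j with
  | zero => exact Finset.Subset.refl _
  | succ j => exact Finset.subset_union_right

lemma pickAux_snd_mono {γ : Type*} [DecidableEq γ] (N : ℕ → Finset γ) (d : ℕ → ℕ)
    {i j : ℕ} (h : i ≤ j) : (pickAux N d i).2 ⊆ (pickAux N d j).2 := by
  induction j with
  | zero => simp [Nat.le_zero.mp h]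
  | succ j ih =>
      rcases Nat.lt_or_ge i (j+1) with h' | h'
      · exact (ih (by omega)).trans (by rw [pickAux_snd]; exact Finset.subset_union_left)
      · have : i = j + 1 := by omega
        subst this; exact Finset.Subset.refl _

lemma pickAux_disjoint {γ : Type*} [DecidableEq γ] (N : ℕ → Finset γ) (d : ℕ → ℕ)
    {i j : ℕ} (h : i < j) : Disjoint ((pickAux N d i).1) ((pickAux N d j).1) := by
  obtain ⟨j, rfl⟩ : ∃ j', j = j' + 1 := ⟨j - 1, by omega⟩
  have h1 : (pickAux N d i).1 ⊆ (pickAux N d j).2 :=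
    (pickAux_fst_subset_snd N d i).trans (pickAux_snd_mono N d (by omega))
  have h2 : (pickAux N d (j+1)).1 ⊆ N (j+1) \ (pickAux N d j).2 := part_subset _ _
  exact Finset.disjoint_left.mpr fun a ha hb =>
    (Finset.mem_sdiff.mp (h2 hb)).2 (h1 ha)

lemma pickAux_card {γ : Type*} [DecidableEq γ] (N : ℕ → Finset γ) (d : ℕ → ℕ) (n : ℕ)
    (h : ∀ j < n, ∑ i ∈ Finset.range (j+1), d i ≤ (N j).card) :
    ∀ j < n, ((pickAux N d j).2.card ≤ ∑ i ∈ Finset.range (j+1), d i) ∧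
      ((pickAux N d j).1.card = d j) := by
  intro j
  induction j with
  | zero =>
      intro hj
      have hd : d 0 ≤ (N 0).card := by simpa using h 0 hj
      constructor
      · simp [pickAux, part_card hd]
      · simpa [pickAux] using part_card hd
  | succ j ih =>
      intro hj
      obtain ⟨hU, _⟩ := ih (by omega)
      have hcard : d (j+1) ≤ (N (j+1) \ (pickAux N d j).2).card := by
        have h1 := h (j+1) hj
        have h2 : (N (j+1)).card - (pickAux N d j).2.card ≤
            (N (j+1) \ (pickAux N d j).2).card := Finset.le_card_sdiff _ _
        rw [Finset.sum_range_succ] at h1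
        omega
      have hL : (pickAux N d (j+1)).1.card = d (j+1) := part_card hcard
      refine ⟨?_, hL⟩
      rw [pickAux_snd, Finset.sum_range_succ]
      calc ((pickAux N d j).2 ∪ (pickAux N d (j+1)).1).card
          ≤ (pickAux N d j).2.card + (pickAux N d (j+1)).1.card := Finset.card_union_le _ _
        _ ≤ (∑ i ∈ Finset.range (j+1), d i) + d (j+1) := by rw [hL]; omega

/-- The greedy selection lemma. -/
lemma greedy {γ : Type*} [DecidableEq γ] (N : ℕ → Finset γ) (d : ℕ → ℕ) (n : ℕ)
    (h : ∀ j < n, ∑ i ∈ Finset.range (j+1), d i ≤ (N j).card) :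
    ∃ L : ℕ → Finset γ, (∀ j < n, L j ⊆ N j ∧ (L j).card = d j) ∧
      ∀ i j, i < j → Disjoint (L i) (L j) :=
  ⟨fun j => (pickAux N d j).1,
    fun j hj => ⟨pickAux_fst_subset N d j, (pickAux_card N d n h j hj).2⟩,
    fun _ _ hij => pickAux_disjoint N d hij⟩

lemma sum_subtype_le_sum {W : Type*} [Fintype W] (p : W → Prop) (f : W → ℕ) :
    ∑ c : Subtype p, f c.1 ≤ ∑ c : W, f c := by
  rw [show ∑ c : Subtype p, f c.1 = ∑ x ∈ univ.map (Function.Embedding.subtype p), f x from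
    (Finset.sum_map univ (Function.Embedding.subtype p) f).symm]
  exact Finset.sum_le_sum_of_subset (Finset.subset_univ _)

/-- Every vertex not equal to a basepoint of its component has a neighbor
strictly closer to the basepoint. -/
lemma exists_parent {W : Type*} (G : SimpleGraph W) (v b : W) (hreach : G.Reachable v b)
    (hne : v ≠ b) : ∃ u, G.Adj v u ∧ G.dist u b + 1 = G.dist v b := by
  have hpos : 0 < G.dist v b := hreach.pos_dist_of_ne hne
  obtain ⟨p, hp⟩ := hreach.exists_walk_length_eq_dist
  cases p with
  | nil => exact absurd rfl hne
  | @cons _ u _ hadj q =>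
      refine ⟨u, hadj, ?_⟩
      have h1 : G.dist u b ≤ q.length := dist_le q
      have h2 : G.dist v b ≤ G.dist u b + 1 := by
        obtain ⟨q', hq'⟩ := (q.reachable).exists_walk_length_eq_dist
        have := dist_le (SimpleGraph.Walk.cons hadj q')
        simpa [hq', Nat.add_comm] using this
      simp only [SimpleGraph.Walk.length_cons] at hp
      omega

/-- A finite graph has at least `card V - #components` edges. -/
lemma card_le_edge_add_comp {W : Type*} [Fintype W] (G : SimpleGraph W) :
    Fintype.card W ≤ G.edgeFinset.card + Fintype.card G.ConnectedComponent := by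
  classical
  set b : G.ConnectedComponent → W := fun c => c.exists_rep.choose with hbdef
  have hbmem : ∀ c, G.connectedComponentMk (b c) = c := fun c => c.exists_rep.choose_spec
  have hpar : ∀ v : W, v ≠ b (G.connectedComponentMk v) →
      ∃ u, G.Adj v u ∧ G.dist u (b (G.connectedComponentMk v)) + 1
        = G.dist v (b (G.connectedComponentMk v)) := by
    intro v hv
    exact exists_parent G v _ (ConnectedComponent.eq.mp (hbmem _).symm) hv
  let f : W → G.edgeSet ⊕ G.ConnectedComponent := fun v =>
    if hv : v = b (G.connectedComponentMk v) then Sum.inr (G.connectedComponentMk v)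
    else Sum.inl ⟨s(v, (hpar v hv).choose), (hpar v hv).choose_spec.1⟩
  have hinj : Function.Injective f := by
    intro v w hvw
    by_cases hv : v = b (G.connectedComponentMk v) <;>
      by_cases hw : w = b (G.connectedComponentMk w)
    · rw [show f v = Sum.inr (G.connectedComponentMk v) from dif_pos hv,
        show f w = Sum.inr (G.connectedComponentMk w) from dif_pos hw] at hvw
      exact hv.trans ((congrArg b (Sum.inr.inj hvw)).trans hw.symm)
    · rw [show f v = Sum.inr (G.connectedComponentMk v) from dif_pos hv,
        show f w = _ from dif_neg hw] at hvw
      cases hvw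
    · rw [show f v = _ from dif_neg hv,
        show f w = Sum.inr (G.connectedComponentMk w) from dif_pos hw] at hvw
      cases hvw
    · rw [show f v = _ from dif_neg hv, show f w = _ from dif_neg hw] at hvw
      have hedge : s(v, (hpar v hv).choose) = s(w, (hpar w hw).choose) :=
        congrArg Subtype.val (Sum.inl.inj hvw)
      rw [Sym2.eq_iff] at hedge
      rcases hedge with ⟨h1, _⟩ | ⟨h1, h2⟩
      · exact h1
      · exfalso
        have hadj_w := (hpar w hw).choose_spec.1
        have hcc : G.connectedComponentMk v = G.connectedComponentMk w := by
          rw [h1]; exact (ConnectedComponent.eq.mpr hadj_w.reachable).symm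
        have s1 := (hpar v hv).choose_spec.2
        have s2 := (hpar w hw).choose_spec.2
        rw [h2] at s1
        rw [← h1, ← hcc] at s2
        omega
  have := Fintype.card_le_of_injective f hinj
  rw [Fintype.card_sum, ← SimpleGraph.edgeFinset_card] at this; omega

lemma sum_card_supp {W : Type*} [Fintype W] (G : SimpleGraph W) :
    ∑ c : G.ConnectedComponent, Nat.card c.supp = Fintype.card W := by
  classical
  have h1 : ∀ c : G.ConnectedComponent, Nat.card c.supp
      = Fintype.card {v : W // G.connectedComponentMk v = c} := by
    intro c
    rw [Nat.card_eq_fintype_card]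
    exact Fintype.card_congr (Equiv.subtypeEquivRight (fun v => c.mem_supp_iff v))
  simp_rw [h1]
  rw [← Fintype.card_sigma]
  exact Fintype.card_congr (Equiv.sigmaFiberEquiv G.connectedComponentMk)

lemma one_le_card_supp {W : Type*} [Fintype W] (G : SimpleGraph W) (c : G.ConnectedComponent) :
    1 ≤ Nat.card c.supp := by
  obtain ⟨v, hv⟩ := c.exists_rep
  have : v ∈ c.supp := by rw [ConnectedComponent.mem_supp_iff]; exact hv
  have : Nonempty c.supp := ⟨⟨v, this⟩⟩
  exact Nat.card_pos

lemma sum_supp_sub_one_le {W : Type*} [Fintype W] (G : SimpleGraph W) :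
    ∑ c : G.ConnectedComponent, (Nat.card c.supp - 1) ≤ G.edgeFinset.card := by
  classical
  have h1 : ∑ c : G.ConnectedComponent, (Nat.card c.supp - 1) + Fintype.card G.ConnectedComponent
      = ∑ c : G.ConnectedComponent, Nat.card c.supp := by
    have key : ∀ c : G.ConnectedComponent, Nat.card c.supp - 1 + 1 = Nat.card c.supp :=
      fun c => Nat.sub_add_cancel (one_le_card_supp G c)
    calc ∑ c : G.ConnectedComponent, (Nat.card c.supp - 1) + Fintype.card G.ConnectedComponent
        = ∑ c : G.ConnectedComponent, (Nat.card c.supp - 1 + 1) := by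
          rw [Finset.sum_add_distrib, Finset.sum_const, Finset.card_univ, smul_eq_mul, mul_one]
      _ = ∑ c : G.ConnectedComponent, Nat.card c.supp := Finset.sum_congr rfl fun c _ => key c
  have h2 := sum_card_supp G
  have h3 := card_le_edge_add_comp G
  omega

/-- Abstract embedding lemma: given sizes `s c` with `∑ s ≤ E`, each `≥ 1`,
and vertices `y i` of the given degrees, embed the stars. -/
lemma embed_stars {α β C : Type*} [Fintype α] [Fintype β] [Fintype C]
    (H : SimpleGraph (α ⊕ β))
    (hbip : ∀ x y, H.Adj x y → x.isLeft ≠ y.isLeft)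
    (s : C → ℕ) (E n : ℕ) (hnC : Fintype.card C = n) (hn2 : 2 ≤ n)
    (hs1 : ∀ c, 1 ≤ s c) (hssum : ∑ c, s c ≤ E)
    (y : Fin n → β) (hyinj : Function.Injective y)
    (hy0 : E ≤ (H.neighborFinset (Sum.inr (y ⟨0, by omega⟩))).card)
    (hyi : ∀ i : Fin n, (i : ℕ) ≠ 0 → E - 1 ≤ (H.neighborFinset (Sum.inr (y i))).card) :
    ∃ (ctr : C → β) (lvs : C → Finset α),
      Function.Injective ctr ∧ (∀ c, (lvs c).card = s c) ∧
      (∀ c c', c ≠ c' → Disjoint (lvs c) (lvs c')) ∧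
      (∀ c, ∀ a ∈ lvs c, H.Adj (Sum.inr (ctr c)) (Sum.inl a)) := by
  classical
  have hn0 : 0 < n := by omega
  set e := Fintype.equivFinOfCardEq hnC with he
  set z : Fin n → β := fun j => y ⟨((j : ℕ) + 1) % n, Nat.mod_lt _ hn0⟩ with hz
  have hmodfact : ∀ j : Fin n, (((j : ℕ) + 1) % n = (j : ℕ) + 1 ∧ (j : ℕ) + 1 < n)
      ∨ (((j : ℕ) + 1) % n = 0 ∧ (j : ℕ) + 1 = n) := by
    intro j
    rcases Nat.lt_or_ge ((j : ℕ) + 1) n with h | h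
    · exact Or.inl ⟨Nat.mod_eq_of_lt h, h⟩
    · have hj := j.2
      have heq : (j : ℕ) + 1 = n := by omega
      exact Or.inr ⟨by rw [heq, Nat.mod_self], heq⟩
  have hzinj : Function.Injective z := by
    intro i j hij
    have h1 : ((i : ℕ) + 1) % n = ((j : ℕ) + 1) % n := congrArg Fin.val (hyinj hij)
    have hi := hmodfact i; have hj := hmodfact j
    apply Fin.ext
    rcases hi with ⟨hi1, hi2⟩ | ⟨hi1, hi2⟩ <;> rcases hj with ⟨hj1, hj2⟩ | ⟨hj1, hj2⟩ <;> omega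
  have hdeg : ∀ v : β, (univ.filter fun a : α => H.Adj (Sum.inr v) (Sum.inl a)).card
      = (H.neighborFinset (Sum.inr v)).card := by
    intro v
    have himg : H.neighborFinset (Sum.inr v)
        = (univ.filter fun a : α => H.Adj (Sum.inr v) (Sum.inl a)).image Sum.inl := by
      ext w
      simp only [mem_neighborFinset, Finset.mem_image, Finset.mem_filter, Finset.mem_univ,
        true_and]
      constructor
      · intro hadj
        have hlft := hbip _ _ hadj
        cases w with
        | inl a => exact ⟨a, hadj, rfl⟩
        | inr b0 => simp at hlft
      · rintro ⟨a, ha, rfl⟩; exact ha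
    rw [himg, Finset.card_image_of_injective _ Sum.inl_injective]
  set d : ℕ → ℕ := fun i => if h : i < n then s (e.symm ⟨i, h⟩) else 0 with hd
  set Nf : ℕ → Finset α := fun i => if h : i < n then
      univ.filter (fun a => H.Adj (Sum.inr (z ⟨i, h⟩)) (Sum.inl a)) else ∅ with hNf
  have hdsum : ∑ i ∈ Finset.range n, d i = ∑ c, s c := by
    calc ∑ i ∈ Finset.range n, d i = ∑ j : Fin n, d j.1 :=
          (Fin.sum_univ_eq_sum_range _ n).symm
      _ = ∑ j : Fin n, s (e.symm j) := Finset.sum_congr rfl fun j _ => by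
          rw [show d j.1 = s (e.symm ⟨j.1, j.2⟩) from dif_pos j.2, Fin.eta]
      _ = ∑ c, s c := Equiv.sum_comp e.symm s
  have htail : ∀ j, j < n → ∑ i ∈ Finset.range (j+1), d i + (n - (j+1)) ≤ ∑ c, s c := by
    intro j hj
    rw [← hdsum, ← Finset.sum_range_add_sum_Ico d (show j + 1 ≤ n by omega)]
    have hlow : (Finset.Ico (j+1) n).card • 1 ≤ ∑ i ∈ Finset.Ico (j+1) n, d i :=
      Finset.card_nsmul_le_sum _ _ _ (fun i hi => by
        have hi' := (Finset.mem_Ico.mp hi).2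
        rw [show d i = s (e.symm ⟨i, hi'⟩) from dif_pos hi']
        exact hs1 _)
    rw [Nat.card_Ico, smul_eq_mul, mul_one] at hlow
    omega
  have hpre : ∀ j, j < n → ∑ i ∈ Finset.range (j+1), d i ≤ (Nf j).card := by
    intro j hj
    rw [show Nf j = univ.filter (fun a => H.Adj (Sum.inr (z ⟨j, hj⟩)) (Sum.inl a))
      from dif_pos hj, hdeg]
    have ht := htail j hj
    by_cases hlast : j + 1 = n
    · have hzj : z ⟨j, hj⟩ = y ⟨0, by omega⟩ := by
        show y _ = y _
        exact congrArg y (Fin.ext (by show (j + 1) % n = 0; rw [hlast, Nat.mod_self]))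
      rw [hzj]
      omega
    · have hne : ((j + 1) % n : ℕ) ≠ 0 := by
        rw [Nat.mod_eq_of_lt (by omega)]; omega
      have hd2 := hyi ⟨(j + 1) % n, Nat.mod_lt _ hn0⟩ hne
      have hzj : z ⟨j, hj⟩ = y ⟨(j + 1) % n, Nat.mod_lt _ hn0⟩ := rfl
      rw [hzj]
      omega
  obtain ⟨L, hL1, hL2⟩ := greedy Nf d n hpre
  refine ⟨fun c => z (e c), fun c => L (e c).1, ?_, ?_, ?_, ?_⟩
  · exact fun c c' h => e.injective (hzinj h)
  · intro c
    have h1 := (hL1 (e c).1 (e c).2).2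
    rw [h1, show d (e c).1 = s (e.symm ⟨(e c).1, (e c).2⟩) from dif_pos (e c).2,
      Fin.eta, Equiv.symm_apply_apply]
  · intro c c' hcc
    have hne : (e c).1 ≠ (e c').1 := fun h => hcc (e.injective (Fin.ext h))
    rcases Nat.lt_or_ge (e c).1 (e c').1 with h | h
    · exact hL2 _ _ h
    · exact (hL2 _ _ (by omega)).symm
  · intro c a ha
    have hsub := (hL1 (e c).1 (e c).2).1 ha
    rw [show Nf (e c).1 = univ.filter
      (fun a => H.Adj (Sum.inr (z ⟨(e c).1, (e c).2⟩)) (Sum.inl a)) from dif_pos (e c).2,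
      Fin.eta] at hsub
    exact (Finset.mem_filter.mp hsub).2

lemma big {W α β : Type*} [Fintype W] [Fintype α] [Fintype β] (G : SimpleGraph W)
    (p : G.ConnectedComponent → Prop)
    (hp : ∀ c, p c → ∃ a b, G.Adj a b ∧ G.connectedComponentMk a = c)
    (H : SimpleGraph (α ⊕ β))
    (hbip : ∀ x y, H.Adj x y → x.isLeft ≠ y.isLeft)
    (n E : ℕ) (hn : Nat.card {c : G.ConnectedComponent // p c} = n)
    (hE : G.edgeFinset.card ≤ E) (hn2 : 2 ≤ n)
    (y : Fin n → β) (hyinj : Function.Injective y)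
    (hy0 : E ≤ (H.neighborFinset (Sum.inr (y ⟨0, by omega⟩))).card)
    (hyi : ∀ i : Fin n, (i : ℕ) ≠ 0 → E - 1 ≤ (H.neighborFinset (Sum.inr (y i))).card) :
    ∃ (ctr : {c : G.ConnectedComponent // p c} → β)
      (lvs : {c : G.ConnectedComponent // p c} → Finset α),
      Function.Injective ctr ∧
      (∀ c, (lvs c).card = Nat.card c.1.supp - 1) ∧
      (∀ c c', c ≠ c' → Disjoint (lvs c) (lvs c')) ∧
      (∀ c, ∀ a ∈ lvs c, H.Adj (Sum.inr (ctr c)) (Sum.inl a)) := by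
  classical
  have hnC : Fintype.card {c : G.ConnectedComponent // p c} = n := by
    rw [← Nat.card_eq_fintype_card]; exact hn
  have hs1 : ∀ c : {c : G.ConnectedComponent // p c}, 1 ≤ Nat.card c.1.supp - 1 := by
    rintro ⟨c, hc⟩
    obtain ⟨a, b2, hab, hmk⟩ := hp c hc
    show 1 ≤ Nat.card c.supp - 1
    have hb2 : G.connectedComponentMk b2 = c :=
      (ConnectedComponent.eq.mpr hab.reachable).symm.trans hmk
    have h2 : 1 < Fintype.card c.supp :=
      Fintype.one_lt_card_iff.mpr ⟨⟨a, (c.mem_supp_iff a).mpr hmk⟩,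
        ⟨b2, (c.mem_supp_iff b2).mpr hb2⟩, fun h => hab.ne (congrArg Subtype.val h)⟩
    have h3 : 2 ≤ Nat.card c.supp := by rw [Nat.card_eq_fintype_card]; omega
    omega
  have hssum : ∑ c : {c : G.ConnectedComponent // p c}, (Nat.card c.1.supp - 1) ≤ E :=
    (sum_subtype_le_sum p (fun c => Nat.card c.supp - 1)).trans
      ((sum_supp_sub_one_le G).trans hE)
  exact embed_stars H hbip _ E n hnC hn2 hs1 hssum y hyinj hy0 hyi

theorem stmt_0 {V α β : Type*} [Fintype V] [Fintype α] [Fintype β]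
    (k : ℕ) (T : SimpleGraph V) (hT : T.IsTree)
    (hcard : Fintype.card V = 2 * k + 3) (hdiam : ∀ v w : V, T.dist v w ≤ 4)
    (r : V) (hr : ∀ w, ecc T r ≤ ecc T w)
    (hp' : 2 ≤ numNontriv T r)
    -- `H` is a bipartite graph with parts `X = α` and `Y = β`
    (H : SimpleGraph (α ⊕ β))
    (hbip : ∀ x y, H.Adj x y → x.isLeft ≠ y.isLeft)
    (hX : eFT T r ≤ Fintype.card α) (hY : numNontriv T r ≤ Fintype.card β)
    -- the vertices `y_0, y_1, …, y_{p'-1} ∈ Y` with large degrees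
    (y : Fin (numNontriv T r) → β) (hyinj : Function.Injective y)
    (hy0 : eFT T r ≤ (H.neighborFinset (Sum.inr (y ⟨0, by omega⟩))).card)
    (hyi : ∀ i : Fin (numNontriv T r), (i : ℕ) ≠ 0 →
      eFT T r - 1 ≤ (H.neighborFinset (Sum.inr (y i))).card) :
    -- `H` contains a copy of `F_T` with all centers of its star components in `Y`:
    -- an injective choice of a center `ctr c ∈ Y` and of pairwise disjoint leaf sets
    -- `lvs c ⊆ X` of the right sizes, completely joined to the corresponding centers.
    ∃ (ctr : {c : (delRoot T r).ConnectedComponent // isNontriv T r c} → β)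
      (lvs : {c : (delRoot T r).ConnectedComponent // isNontriv T r c} → Finset α),
      Function.Injective ctr ∧
      (∀ c, (lvs c).card = Nat.card c.1.supp - 1) ∧
      (∀ c c', c ≠ c' → Disjoint (lvs c) (lvs c')) ∧
      (∀ c, ∀ a ∈ lvs c, H.Adj (Sum.inr (ctr c)) (Sum.inl a)) := by
  classical
  have hE : (delRoot T r).edgeFinset.card ≤ eFT T r := le_of_eq (by rw [eFT])
  exact big (delRoot T r) (isNontriv T r) (fun c hc => hc) H hbip (numNontriv T r)
    (eFT T r) rfl hE hp' y hyinj hy0 hyi
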